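/- Under the mod-2 reduction of the recursion of Corollary 1.3, assuming the complex invariants satisfy the dimension-forced vanishing ⟨c1−1,c2,2i⟩^C_{d1} = 0 for d1 ≥ 2 and ⟨c1−1,2i⟩^C_{d1} = 0 for d1 ≥ 1, the real invariants satisfy ⟨c1,c2,c3,...,ck⟩_d ≡ ⟨c1+c2−1,c3,...,ck⟩_d + ∑_{2i+j=2n−1, i,j≥1} ⟨c1−1,c2,2i⟩^C_1·⟨c3,...,ck,j⟩_{d−2} (mod 2). -/

import Mathlib

open Multiset

/-- Summing a function over the powerset of a multiset, when the function vanishes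
on every nonzero submultiset, gives the value at the empty multiset. -/
lemma aux_powerset_sum (f : Multiset ℕ → ZMod 2) (s : Multiset ℕ)
    (hf : ∀ t : Multiset ℕ, t ≠ 0 → f t = 0) :
    ((s.powerset.map f).sum) = f 0 := by
  induction s using Multiset.induction with
  | empty => simp
  | cons a s ih =>
    rw [Multiset.powerset_cons, Multiset.map_add, Multiset.sum_add, ih]
    have h0 : ((Multiset.map (fun t => a ::ₘ t) s.powerset).map f).sum = 0 := by
      rw [Multiset.map_map]
      apply Multiset.sum_eq_zero
      intro x hx
      obtain ⟨t, ht, rfl⟩ := Multiset.mem_map.mp hx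
      exact hf _ (Multiset.cons_ne_zero)
    rw [h0, add_zero]

/-- Casting a multiset sum of integers to `ZMod 2`. -/
lemma aux_cast_multiset_sum (m : Multiset ℤ) :
    ((m.sum : ℤ) : ZMod 2) = (m.map (fun x : ℤ => (x : ZMod 2))).sum :=
  map_multiset_sum (Int.castRingHom (ZMod 2)) m

open Multiset in
/-- Mod-2 reduction of the recursion of Corollary 1.3 for the real genus-0 GW-invariants
`R` of `P^{2n-1}` (insertions recorded as a multiset of codimensions), in terms of the
complex invariants `C`.  Assuming the recursion together with the dimension-forced
vanishing `⟨c1-1, c2, 2i⟩^C_{d1} = 0` for `d1 ≥ 2` and `⟨c1-1, 2i⟩^C_{d1} = 0` for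
`d1 ≥ 1`, for odd `d ≥ 3` one has
`⟨c1,c2,c_s⟩_d ≡ ⟨c1+c2-1,c_s⟩_d + ∑_{2i+j=2n-1, i,j≥1} ⟨c1-1,c2,2i⟩^C_1 ⟨c_s,j⟩_{d-2}`
modulo 2. -/
theorem stmt_9 (n : ℕ) (hn : 1 ≤ n) (R C : Multiset ℕ → ℕ → ℤ)
    (hrec : ∀ (c1 c2 : ℕ) (s : Multiset ℕ) (d : ℕ), 0 < d →
      R (c1 ::ₘ c2 ::ₘ s) d =
        (d : ℤ) * R ((c1 + c2 - 1) ::ₘ s) d +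
          ∑ d1 ∈ Finset.Ioo 0 d,
            if 2 * d1 < d then
              (Multiset.map (fun t : Multiset ℕ =>
                ∑ i ∈ Finset.Ico 1 n,
                  (2 : ℤ) ^ Multiset.card t *
                    (((d - 2 * d1 : ℕ) : ℤ) *
                        C ((c1 - 1) ::ₘ c2 ::ₘ (2 * i) ::ₘ t) d1 *
                        R ((2 * n - 1 - 2 * i) ::ₘ (s - t)) (d - 2 * d1) -
                      (d1 : ℤ) *
                        C ((c1 - 1) ::ₘ (2 * i) ::ₘ t) d1 *
                        R (c2 ::ₘ (2 * n - 1 - 2 * i) ::ₘ (s - t)) (d - 2 * d1)))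
                s.powerset).sum
            else 0)
    (hvan1 : ∀ (a b i d1 : ℕ), 2 ≤ d1 → C (a ::ₘ b ::ₘ (2 * i) ::ₘ 0) d1 = 0)
    (hvan2 : ∀ (a i d1 : ℕ), 1 ≤ d1 → C (a ::ₘ (2 * i) ::ₘ 0) d1 = 0) :
    ∀ (c1 c2 : ℕ) (s : Multiset ℕ) (d : ℕ), Odd d → 3 ≤ d →
      R (c1 ::ₘ c2 ::ₘ s) d % 2 =
        (R ((c1 + c2 - 1) ::ₘ s) d +
          ∑ i ∈ Finset.Ico 1 n,
            C ((c1 - 1) ::ₘ c2 ::ₘ (2 * i) ::ₘ 0) 1 *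
              R ((2 * n - 1 - 2 * i) ::ₘ s) (d - 2)) % 2 := by
  intro c1 c2 s d hodd hd
  have hd0 : 0 < d := by omega
  rw [hrec c1 c2 s d hd0]
  have key : ∀ a b : ℤ, ((a : ZMod 2) = (b : ZMod 2)) → a % 2 = b % 2 := by
    intro a b h
    exact (ZMod.intCast_eq_intCast_iff a b 2).mp h
  apply key
  have two_zero : (2 : ZMod 2) = 0 := by decide
  have hdodd : d % 2 = 1 := Nat.odd_iff.mp hodd
  have hdcast : ((d : ℕ) : ZMod 2) = 1 := by
    rw [← ZMod.natCast_mod d 2, hdodd, Nat.cast_one]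
  have hd2cast : ((d - 2 : ℕ) : ZMod 2) = 1 := by
    have h1 : (d - 2) % 2 = 1 := by omega
    rw [← ZMod.natCast_mod (d - 2) 2, h1, Nat.cast_one]
  have hG : ∀ d1 ∈ Finset.Ioo 0 d,
      ((if 2 * d1 < d then
          (Multiset.map (fun t : Multiset ℕ =>
            ∑ i ∈ Finset.Ico 1 n,
              (2 : ℤ) ^ Multiset.card t *
                (((d - 2 * d1 : ℕ) : ℤ) *
                    C ((c1 - 1) ::ₘ c2 ::ₘ (2 * i) ::ₘ t) d1 *
                    R ((2 * n - 1 - 2 * i) ::ₘ (s - t)) (d - 2 * d1) -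
                  (d1 : ℤ) *
                    C ((c1 - 1) ::ₘ (2 * i) ::ₘ t) d1 *
                    R (c2 ::ₘ (2 * n - 1 - 2 * i) ::ₘ (s - t)) (d - 2 * d1)))
            s.powerset).sum
        else 0 : ℤ) : ZMod 2) =
      if d1 = 1 then
        ∑ i ∈ Finset.Ico 1 n,
          ((C ((c1 - 1) ::ₘ c2 ::ₘ (2 * i) ::ₘ 0) 1 : ℤ) : ZMod 2) *
            ((R ((2 * n - 1 - 2 * i) ::ₘ s) (d - 2) : ℤ) : ZMod 2)
      else 0 := by
    intro d1 hd1
    simp only [Finset.mem_Ioo] at hd1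
    have hps : ∀ d1' : ℕ, 0 < d1' →
        (((Multiset.map (fun t : Multiset ℕ =>
            ∑ i ∈ Finset.Ico 1 n,
              (2 : ℤ) ^ Multiset.card t *
                (((d - 2 * d1' : ℕ) : ℤ) *
                    C ((c1 - 1) ::ₘ c2 ::ₘ (2 * i) ::ₘ t) d1' *
                    R ((2 * n - 1 - 2 * i) ::ₘ (s - t)) (d - 2 * d1') -
                  (d1' : ℤ) *
                    C ((c1 - 1) ::ₘ (2 * i) ::ₘ t) d1' *
                    R (c2 ::ₘ (2 * n - 1 - 2 * i) ::ₘ (s - t)) (d - 2 * d1')))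
            s.powerset).sum : ℤ) : ZMod 2) =
        ∑ i ∈ Finset.Ico 1 n,
          ((d - 2 * d1' : ℕ) : ZMod 2) *
            ((C ((c1 - 1) ::ₘ c2 ::ₘ (2 * i) ::ₘ 0) d1' : ℤ) : ZMod 2) *
            ((R ((2 * n - 1 - 2 * i) ::ₘ s) (d - 2 * d1') : ℤ) : ZMod 2) := by
      intro d1' hd1'
      rw [aux_cast_multiset_sum, Multiset.map_map]
      refine (aux_powerset_sum _ s ?_).trans ?_
      · intro t ht
        simp only [Function.comp_apply]
        rw [Int.cast_sum]
        apply Finset.sum_eq_zero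
        intro i _
        rw [Int.cast_mul, Int.cast_pow]
        have h2 : ((2 : ℤ) : ZMod 2) = 0 := by decide
        rw [h2, zero_pow, zero_mul]
        intro hc
        exact ht (Multiset.card_eq_zero.mp hc)
      · simp only [Function.comp_apply, Multiset.card_zero, pow_zero, one_mul,
          Multiset.sub_zero]
        rw [Int.cast_sum]
        apply Finset.sum_congr rfl
        intro i _
        rw [hvan2 (c1 - 1) i d1' hd1']
        push_cast
        ring
    split_ifs with h1 h2 h2
    · subst h2
      rw [hps 1 one_pos]
      apply Finset.sum_congr rfl
      intro i _
      rw [show d - 2 * 1 = d - 2 by omega, hd2cast, one_mul]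
    · rw [hps d1 hd1.1]
      apply Finset.sum_eq_zero
      intro i _
      rw [hvan1 (c1 - 1) c2 i d1 (by omega)]
      push_cast
      ring
    · exact absurd (by omega : 2 * d1 < d) h1
    · exact Int.cast_zero
  rw [Int.cast_add, Int.cast_add, Int.cast_mul, Int.cast_natCast, hdcast, one_mul,
    Int.cast_sum, Int.cast_sum, Finset.sum_congr rfl hG, Finset.sum_ite_eq',
    if_pos (show (1 : ℕ) ∈ Finset.Ioo 0 d by simp only [Finset.mem_Ioo]; omega)]
  simp only [Int.cast_mul]
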